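/- Let f, g : V → ℝ be twice continuously differentiable and let σ : V → ℂ be twice continuously differentiable. Then the Souriau–Kostant prequantum operators satisfy the correspondence principle: for every x ∈ V, (Q_f(Q_g σ))(x) − (Q_g(Q_f σ))(x) = (Q_{{f,g}} σ)(x), i.e. [Q_f, Q_g] = Q_{{f,g}}. -/

import Mathlib

local notation "⟪" x ", " y "⟫_ℝ" => @inner ℝ _ _ x y

/-- The Hamiltonian vector field `X_f = J∘∇f` of `f` w.r.t. `ω(u,v) = ⟨Ju,v⟩`. -/
noncomputable def hamVF {V : Type*} [NormedAddCommGroup V] [InnerProductSpace ℝ V]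
    [CompleteSpace V] (J : V →ₗ[ℝ] V) (f : V → ℝ) : V → V := fun x =>
  J (gradient f x)

/-- The Souriau–Kostant prequantum operator
`(Q_f σ)(x) = dσ_x(X_f(x)) − πi·ω(x,X_f(x))·σ(x) + 2πi·f(x)·σ(x)`. -/
noncomputable def prequantOp {V : Type*} [NormedAddCommGroup V] [InnerProductSpace ℝ V]
    [CompleteSpace V] (J : V →ₗ[ℝ] V) (f : V → ℝ) (σ : V → ℂ) : V → ℂ := fun x =>
  fderiv ℝ σ x (hamVF J f x) - Real.pi * Complex.I * ((⟪J x, hamVF J f x⟫_ℝ : ℝ) : ℂ) * σ x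
    + 2 * Real.pi * Complex.I * (f x : ℂ) * σ x

open InnerProductSpace in
theorem grad_contDiff {V : Type*} [NormedAddCommGroup V] [InnerProductSpace ℝ V]
    [FiniteDimensional ℝ V] (f : V → ℝ) (hf : ContDiff ℝ 2 f) :
    ContDiff ℝ 1 (gradient f) := by
  rw [show gradient f = fun y => (toDual ℝ V).symm (fderiv ℝ f y) from rfl]
  exact (toDual ℝ V).symm.contDiff.comp (hf.fderiv_right (by norm_num))

open InnerProductSpace in
theorem hamVF_hasFDerivAt {V : Type*} [NormedAddCommGroup V] [InnerProductSpace ℝ V]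
    [FiniteDimensional ℝ V] (J : V →ₗ[ℝ] V) (f : V → ℝ) (hf : ContDiff ℝ 2 f) (x : V) :
    HasFDerivAt (hamVF J f)
      ((J.toContinuousLinearMap).comp (fderiv ℝ (gradient f) x)) x := by
  exact (J.toContinuousLinearMap.hasFDerivAt (x := gradient f x)).comp x
    ((grad_contDiff f hf).differentiable one_ne_zero).differentiableAt.hasFDerivAt

open InnerProductSpace in
theorem grad_inner {V : Type*} [NormedAddCommGroup V] [InnerProductSpace ℝ V]
    [FiniteDimensional ℝ V] (f : V → ℝ) (x v : V) :
    ⟪gradient f x, v⟫_ℝ = fderiv ℝ f x v := by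
  rw [show gradient f x = (toDual ℝ V).symm (fderiv ℝ f x) from rfl, toDual_symm_apply]

open InnerProductSpace in
theorem hess_symm {V : Type*} [NormedAddCommGroup V] [InnerProductSpace ℝ V]
    [FiniteDimensional ℝ V] (f : V → ℝ) (hf : ContDiff ℝ 2 f) (x u v : V) :
    ⟪fderiv ℝ (gradient f) x u, v⟫_ℝ = ⟪u, fderiv ℝ (gradient f) x v⟫_ℝ := by
  have hd1 : ∀ y, HasFDerivAt f (fderiv ℝ f y) y := fun y =>
    (hf.differentiable two_ne_zero).differentiableAt.hasFDerivAt
  have hC1 : ContDiff ℝ 1 (fderiv ℝ f) := hf.fderiv_right (by norm_num)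
  have hd2 : HasFDerivAt (fderiv ℝ f) (fderiv ℝ (fderiv ℝ f) x) x :=
    (hC1.differentiable one_ne_zero).differentiableAt.hasFDerivAt
  have hsym := second_derivative_symmetric hd1 hd2
  have hg_at : HasFDerivAt (gradient f) (fderiv ℝ (gradient f) x) x :=
    ((grad_contDiff f hf).differentiable one_ne_zero).differentiableAt.hasFDerivAt
  have key : ∀ a b : V, ⟪fderiv ℝ (gradient f) x a, b⟫_ℝ = fderiv ℝ (fderiv ℝ f) x a b := by
    intro a b
    have h1 : HasFDerivAt (fun y => ⟪gradient f y, b⟫_ℝ)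
        ((fderivInnerCLM ℝ (gradient f x, b)).comp
          ((fderiv ℝ (gradient f) x).prod 0)) x :=
      hg_at.inner ℝ (hasFDerivAt_const b x)
    have h2 : HasFDerivAt (fun y => fderiv ℝ f y b)
        ((fderiv ℝ f x).comp 0 + (fderiv ℝ (fderiv ℝ f) x).flip b) x :=
      hd2.clm_apply (hasFDerivAt_const b x)
    have feq : (fun y => ⟪gradient f y, b⟫_ℝ) = fun y => fderiv ℝ f y b :=
      funext fun y => grad_inner f y b
    rw [feq] at h1
    have := congrArg (fun (L : _ →L[ℝ] ℝ) => L a) (h2.unique h1)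
    simpa [fderivInnerCLM_apply, real_inner_comm b] using this.symm
  rw [key, real_inner_comm, key, hsym]

open InnerProductSpace in
theorem grad_bracket {V : Type*} [NormedAddCommGroup V] [InnerProductSpace ℝ V]
    [FiniteDimensional ℝ V] (J : V →ₗ[ℝ] V)
    (hJiso : ∀ u v : V, ⟪J u, J v⟫_ℝ = ⟪u, v⟫_ℝ) (hJ2 : ∀ v : V, J (J v) = -v)
    (f g : V → ℝ) (hf : ContDiff ℝ 2 f) (hg : ContDiff ℝ 2 g) (x : V) :
    gradient (fun y => ⟪J (hamVF J f y), hamVF J g y⟫_ℝ) x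
      = fderiv ℝ (gradient g) x (hamVF J f x) - fderiv ℝ (gradient f) x (hamVF J g x) := by
  have hXf := hamVF_hasFDerivAt J f hf x
  have hXg := hamVF_hasFDerivAt J g hg x
  have hJXf : HasFDerivAt (fun y => J (hamVF J f y))
      (J.toContinuousLinearMap.comp
        (J.toContinuousLinearMap.comp (fderiv ℝ (gradient f) x))) x :=
    (J.toContinuousLinearMap.hasFDerivAt (x := hamVF J f x)).comp x hXf
  have hω := hJXf.inner ℝ hXg
  have hL : fderiv ℝ (fun y => ⟪J (hamVF J f y), hamVF J g y⟫_ℝ) x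
      = (fderivInnerCLM ℝ (J (hamVF J f x), hamVF J g x)).comp
          ((J.toContinuousLinearMap.comp
            (J.toContinuousLinearMap.comp (fderiv ℝ (gradient f) x))).prod
           (J.toContinuousLinearMap.comp (fderiv ℝ (gradient g) x))) := hω.fderiv
  have hgr : gradient (fun y => ⟪J (hamVF J f y), hamVF J g y⟫_ℝ) x
      = (toDual ℝ V).symm (fderiv ℝ (fun y => ⟪J (hamVF J f y), hamVF J g y⟫_ℝ) x) := rfl
  have hLw : (fderivInnerCLM ℝ (J (hamVF J f x), hamVF J g x)).comp
          ((J.toContinuousLinearMap.comp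
            (J.toContinuousLinearMap.comp (fderiv ℝ (gradient f) x))).prod
           (J.toContinuousLinearMap.comp (fderiv ℝ (gradient g) x)))
      = toDual ℝ V (fderiv ℝ (gradient g) x (hamVF J f x)
          - fderiv ℝ (gradient f) x (hamVF J g x)) := by
    ext v
    simp only [ContinuousLinearMap.coe_comp', Function.comp_apply, fderivInnerCLM_apply,
      ContinuousLinearMap.prod_apply, toDual_apply_apply, LinearMap.coe_toContinuousLinearMap']
    rw [hJ2 (fderiv ℝ (gradient f) x v)]
    rw [show (hamVF J f x) = J (gradient f x) from rfl,
        show (hamVF J g x) = J (gradient g x) from rfl]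
    rw [hJiso, inner_neg_left, inner_sub_left]
    rw [← hess_symm g hg x (J (gradient f x)) v, hess_symm f hf x v (J (gradient g x)),
        real_inner_comm v]
    rw [real_inner_comm v (fderiv ℝ (gradient f) x (J (gradient g x)))]
    exact (sub_eq_add_neg _ _).symm
  rw [hgr, hL, hLw, LinearIsometryEquiv.symm_apply_apply]

open InnerProductSpace in
theorem preq_fderiv {V : Type*} [NormedAddCommGroup V] [InnerProductSpace ℝ V]
    [FiniteDimensional ℝ V] (J : V →ₗ[ℝ] V) (g : V → ℝ) (hg : ContDiff ℝ 2 g)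
    (σ : V → ℂ) (hσ : ContDiff ℝ 2 σ) (x v : V) :
    fderiv ℝ (prequantOp J g σ) x v
      = fderiv ℝ (fderiv ℝ σ) x v (hamVF J g x)
        + fderiv ℝ σ x (J (fderiv ℝ (gradient g) x v))
        - Real.pi * Complex.I *
            ((⟪J v, hamVF J g x⟫_ℝ + ⟪J x, J (fderiv ℝ (gradient g) x v)⟫_ℝ : ℝ) : ℂ) * σ x
        - Real.pi * Complex.I * ((⟪J x, hamVF J g x⟫_ℝ : ℝ) : ℂ) * fderiv ℝ σ x v
        + 2 * Real.pi * Complex.I * ((fderiv ℝ g x v : ℝ) : ℂ) * σ x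
        + 2 * Real.pi * Complex.I * ((g x : ℝ) : ℂ) * fderiv ℝ σ x v := by
  set Jc := J.toContinuousLinearMap with hJc
  have hXg : HasFDerivAt (hamVF J g) (Jc.comp (fderiv ℝ (gradient g) x)) x :=
    hamVF_hasFDerivAt J g hg x
  have hσ1 : ContDiff ℝ 1 (fderiv ℝ σ) := hσ.fderiv_right (by norm_num)
  have hDσ : HasFDerivAt (fderiv ℝ σ) (fderiv ℝ (fderiv ℝ σ) x) x :=
    (hσ1.differentiable one_ne_zero).differentiableAt.hasFDerivAt
  have hσat : HasFDerivAt σ (fderiv ℝ σ x) x :=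
    (hσ.differentiable two_ne_zero).differentiableAt.hasFDerivAt
  have hT1 := hDσ.clm_apply hXg
  have hJx : HasFDerivAt (fun y : V => Jc y) Jc x := Jc.hasFDerivAt
  have hω := hJx.inner ℝ hXg
  have hωC := (Complex.ofRealCLM.hasFDerivAt).comp x hω
  have hB := (hωC.mul hσat).const_mul ((Real.pi : ℂ) * Complex.I)
  have hgat : HasFDerivAt g (fderiv ℝ g x) x :=
    (hg.differentiable two_ne_zero).differentiableAt.hasFDerivAt
  have hgC := (Complex.ofRealCLM.hasFDerivAt).comp x hgat
  have hC := (hgC.mul hσat).const_mul (2 * (Real.pi : ℂ) * Complex.I)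
  have H := (hT1.sub hB).add hC
  have funeq : prequantOp J g σ = fun y =>
      (fderiv ℝ σ y (hamVF J g y)
        - (Real.pi : ℂ) * Complex.I * (Complex.ofRealCLM ⟪Jc y, hamVF J g y⟫_ℝ * σ y))
        + 2 * (Real.pi : ℂ) * Complex.I * (Complex.ofRealCLM (g y) * σ y) := by
    funext y
    simp only [prequantOp, hJc, Complex.ofRealCLM_apply, LinearMap.coe_toContinuousLinearMap']
    ring
  simp only [Function.comp_def, Pi.add_def, Pi.sub_def, Pi.mul_def] at H
  rw [funeq, H.fderiv]
  simp only [ContinuousLinearMap.add_apply, ContinuousLinearMap.sub_apply,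
    ContinuousLinearMap.coe_comp', Function.comp_apply, ContinuousLinearMap.flip_apply,
    ContinuousLinearMap.smul_apply, fderivInnerCLM_apply, ContinuousLinearMap.prod_apply,
    ContinuousLinearMap.coe_smul', Pi.smul_apply, Complex.ofRealCLM_apply,
    LinearMap.coe_toContinuousLinearMap', Complex.real_smul, smul_eq_mul]
  simp only [hJc, LinearMap.coe_toContinuousLinearMap']
  push_cast
  ring

theorem stmt_9 {V : Type*} [NormedAddCommGroup V] [InnerProductSpace ℝ V]
    [FiniteDimensional ℝ V]
    (J : V →ₗ[ℝ] V) (hJiso : ∀ u v : V, ⟪J u, J v⟫_ℝ = ⟪u, v⟫_ℝ)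
    (hJ2 : ∀ v : V, J (J v) = -v)
    (f g : V → ℝ) (hf : ContDiff ℝ 2 f) (hg : ContDiff ℝ 2 g)
    (σ : V → ℂ) (hσ : ContDiff ℝ 2 σ) (x : V) :
    prequantOp J f (prequantOp J g σ) x - prequantOp J g (prequantOp J f σ) x =
      prequantOp J (fun y => ⟪J (hamVF J f y), hamVF J g y⟫_ℝ) σ x := by
  have hσd1 : ∀ y, HasFDerivAt σ (fderiv ℝ σ y) y := fun y =>
    (hσ.differentiable two_ne_zero).differentiableAt.hasFDerivAt
  have hσd2 : HasFDerivAt (fderiv ℝ σ) (fderiv ℝ (fderiv ℝ σ) x) x :=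
    ((hσ.fderiv_right (by norm_num)).differentiable one_ne_zero).differentiableAt.hasFDerivAt
  have hσsym := second_derivative_symmetric hσd1 hσd2
  have skew : ∀ u w : V, ⟪u, J w⟫_ℝ = -⟪J u, w⟫_ℝ := by
    intro u w
    have h1 := hJiso u (J w)
    rw [hJ2 w, inner_neg_right] at h1
    exact h1.symm
  have unfold : ∀ (h : V → ℝ) (τ : V → ℂ), prequantOp J h τ x
      = fderiv ℝ τ x (hamVF J h x)
        - Real.pi * Complex.I * ((⟪J x, hamVF J h x⟫_ℝ : ℝ) : ℂ) * τ x
        + 2 * Real.pi * Complex.I * ((h x : ℝ) : ℂ) * τ x := fun h τ => rfl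
  have hXh : hamVF J (fun y => ⟪J (hamVF J f y), hamVF J g y⟫_ℝ) x
      = J (fderiv ℝ (gradient g) x (hamVF J f x))
        - J (fderiv ℝ (gradient f) x (hamVF J g x)) := by
    rw [show hamVF J (fun y => ⟪J (hamVF J f y), hamVF J g y⟫_ℝ) x
        = J (gradient (fun y => ⟪J (hamVF J f y), hamVF J g y⟫_ℝ) x) from rfl,
      grad_bracket J hJiso hJ2 f g hf hg x, map_sub]
  have e1 : fderiv ℝ g x (hamVF J f x) = ⟪J (hamVF J f x), hamVF J g x⟫_ℝ := by
    rw [← grad_inner g x]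
    rw [show hamVF J f x = J (gradient f x) from rfl,
        show hamVF J g x = J (gradient g x) from rfl, hJiso, real_inner_comm]
  have e2 : fderiv ℝ f x (hamVF J g x) = -⟪J (hamVF J f x), hamVF J g x⟫_ℝ := by
    rw [← grad_inner f x]
    rw [show hamVF J f x = J (gradient f x) from rfl,
        show hamVF J g x = J (gradient g x) from rfl, hJiso, skew]
  have e3 : ⟪J (hamVF J g x), hamVF J f x⟫_ℝ = -⟪J (hamVF J f x), hamVF J g x⟫_ℝ := by
    rw [real_inner_comm, skew]
  rw [unfold f (prequantOp J g σ), unfold g (prequantOp J f σ),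
      unfold (fun y => ⟪J (hamVF J f y), hamVF J g y⟫_ℝ) σ,
      unfold g σ, unfold f σ,
      preq_fderiv J g hg σ hσ x (hamVF J f x),
      preq_fderiv J f hf σ hσ x (hamVF J g x), hXh]
  rw [map_sub (fderiv ℝ σ x), inner_sub_right, hJiso x, hJiso x,
      e1, e2, e3, hσsym (hamVF J f x) (hamVF J g x)]
  push_cast
  ring
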